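/- arXiv:1303.5142 — 2 statements merged into one kernel-verified Lean document; each statement's English description precedes it below -/
import Mathlib

section
/- Let m ≥ 1, let Σ be an m×m real symmetric positive definite matrix with symmetric positive definite square root Σ^{1/2}, let t_1,…,t_m be real numbers, set t_{m+1} := 0 and c_i := t_i − t_{i+1}, and define φ : M_m(ℝ) → ℂ by φ(T) := ∏_{i=1}^m det(E_iᵀ(I_m − i·Σ^{1/2} T Σ^{1/2})E_i)^{−c_i}, using principal-branch complex powers. Let T be an m×m real matrix such that det(E_iᵀ(I_m − i·Σ^{1/2} T Σ^{1/2})E_i) does not lie in (−∞,0] for each i = 1,…,m. Then φ is twice Fréchet differentiable (over ℝ) at T, and its second derivative satisfies D²φ(T)(H, K) = i²·[ (∑_{i=1}^m c_i tr(A_i H))·(∑_{j=1}^m c_j tr(A_j K)) + ∑_{i=1}^m c_i tr(A_i H A_i K) ]·φ(T) for all H, K ∈ M_m(ℝ), where A_i := Σ^{1/2} E_i (E_iᵀ(I_m − i·Σ^{1/2} T Σ^{1/2})E_i)^{−1} E_iᵀ Σ^{1/2}. -/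
open MeasureTheory Matrix Finset

noncomputable section

/-- Measurable space structure on real matrices (the product σ-algebra). -/
instance matrixMeasurableSpace (m n : ℕ) : MeasurableSpace (Matrix (Fin m) (Fin n) ℝ) :=
  MeasurableSpace.pi

attribute [local instance] Matrix.normedAddCommGroup Matrix.normedSpace

/-- `nth κ j` is `κ j` when `j < m` and `0` otherwise. -/
def nth {m : ℕ} (κ : Fin m → ℕ) (j : ℕ) : ℕ := if h : j < m then κ ⟨j, h⟩ else 0

/-- Determinant of the `k × k` leading principal submatrix (for `k ≤ m`). -/
def lpm {R : Type*} [CommRing R] {m : ℕ} (A : Matrix (Fin m) (Fin m) R) (k : ℕ) : R :=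
  (Matrix.of fun r s : Fin (min k m) =>
    A (Fin.castLE (min_le_right k m) r) (Fin.castLE (min_le_right k m) s)).det

/-- The generalized power (highest weight vector)
`q_κ(A) = det(A)^{k_m} ∏_{i=1}^{m-1} det(A_i)^{k_i - k_{i+1}}`. -/
def gpow {R : Type*} [CommRing R] {m : ℕ} (κ : Fin m → ℕ) (A : Matrix (Fin m) (Fin m) R) : R :=
  ∏ i : Fin m, lpm A ((i : ℕ) + 1) ^ (nth κ (i : ℕ) - nth κ ((i : ℕ) + 1))

/-- Lebesgue measure on symmetric matrices: the pushforward of Lebesgue measure on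
`ℝ^{m(m+1)/2}` under the coordinates `(x_{ij})_{i ≤ j}`. -/
def symVolume (m : ℕ) : Measure (Matrix (Fin m) (Fin m) ℝ) :=
  Measure.map (fun x : ({p : Fin m × Fin m // p.1 ≤ p.2} → ℝ) =>
    Matrix.of fun i j => if h : i ≤ j then x ⟨(i, j), h⟩ else x ⟨(j, i), le_of_not_ge h⟩)
    volume

/-- The open cone of symmetric positive definite real matrices. -/
def PDcone (m : ℕ) : Set (Matrix (Fin m) (Fin m) ℝ) := {X | X.PosDef}

/-- The `m × k` matrix formed by the first `k` columns of the identity matrix. -/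
def Emat (R : Type*) [Zero R] [One R] (m k : ℕ) : Matrix (Fin m) (Fin k) R :=
  Matrix.of fun r c => if (r : ℕ) = (c : ℕ) then 1 else 0

/-- The generalized gamma function of weight `κ`:
`Γ_m[a, κ] = π^{m(m-1)/4} ∏_{i=1}^m Γ(a + k_i - (i-1)/2)`. -/
def GammaI (m : ℕ) (κ : Fin m → ℕ) (a : ℝ) : ℝ :=
  Real.pi ^ (((m * (m - 1) : ℕ) : ℝ) / 4) *
    ∏ i : Fin m, Real.Gamma (a + κ i - (i : ℝ) / 2)

/-- Kotz's generalized gamma function of weight `-κ`: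
`Γ_m[a, -κ] = π^{m(m-1)/4} ∏_{i=1}^m Γ(a - k_i - (m-i)/2)`. -/
def GammaII (m : ℕ) (κ : Fin m → ℕ) (a : ℝ) : ℝ :=
  Real.pi ^ (((m * (m - 1) : ℕ) : ℝ) / 4) *
    ∏ i : Fin m, Real.Gamma (a - κ i - ((m : ℝ) - 1 - (i : ℝ)) / 2)

/-- The Riesz type I density with parameters `(a, κ, Σ)`. -/
def densityI {m : ℕ} (κ : Fin m → ℕ) (Sig : Matrix (Fin m) (Fin m) ℝ) (a : ℝ)
    (X : Matrix (Fin m) (Fin m) ℝ) : ℝ :=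
  Real.exp (-((Sig⁻¹ * X).trace)) * X.det ^ (a - ((m : ℝ) + 1) / 2) * gpow κ X /
    (GammaI m κ a * Sig.det ^ a * gpow κ Sig)

/-- The Riesz type II density with parameters `(a, κ, Σ)`. -/
def densityII {m : ℕ} (κ : Fin m → ℕ) (Sig : Matrix (Fin m) (Fin m) ℝ) (a : ℝ)
    (X : Matrix (Fin m) (Fin m) ℝ) : ℝ :=
  Real.exp (-((Sig⁻¹ * X).trace)) * X.det ^ (a - ((m : ℝ) + 1) / 2) * gpow κ X⁻¹ /
    (GammaII m κ a * Sig.det ^ a * gpow κ Sig⁻¹)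

/-- Entrywise coercion of a real matrix to a complex matrix. -/
def cmat {m : ℕ} (A : Matrix (Fin m) (Fin m) ℝ) : Matrix (Fin m) (Fin m) ℂ :=
  A.map Complex.ofReal

/-- `nthR t j` is `t j` when `j < m` and `0` otherwise. -/
def nthR {m : ℕ} (t : Fin m → ℝ) (j : ℕ) : ℝ := if h : j < m then t ⟨j, h⟩ else 0

/-- The `k × k` leading principal submatrix `E_kᵀ M E_k` of a complex matrix. -/
def lpsub {m : ℕ} (M : Matrix (Fin m) (Fin m) ℂ) (k : ℕ) : Matrix (Fin k) (Fin k) ℂ :=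
  (Emat ℂ m k)ᵀ * M * Emat ℂ m k

/-- The complex matrix `I_m - i · Σ^{1/2} T Σ^{1/2}`. -/
def Rmat {m : ℕ} (Shalf T : Matrix (Fin m) (Fin m) ℝ) : Matrix (Fin m) (Fin m) ℂ :=
  1 - Complex.I • (cmat Shalf * cmat T * cmat Shalf)

/-- `A_i = Σ^{1/2} E_i (E_iᵀ (I_m - i Σ^{1/2} T Σ^{1/2}) E_i)⁻¹ E_iᵀ Σ^{1/2}`. -/
def Amat {m : ℕ} (Shalf T : Matrix (Fin m) (Fin m) ℝ) (i : Fin m) :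
    Matrix (Fin m) (Fin m) ℂ :=
  cmat Shalf * Emat ℂ m ((i : ℕ) + 1) * (lpsub (Rmat Shalf T) ((i : ℕ) + 1))⁻¹ *
    (Emat ℂ m ((i : ℕ) + 1))ᵀ * cmat Shalf

/-- The characteristic function of the Riesz type I distribution,
`φ(T) = ∏_i det(E_iᵀ (I - i Σ^{1/2} T Σ^{1/2}) E_i)^{-(t_i - t_{i+1})}`. -/
def phiI {m : ℕ} (Shalf : Matrix (Fin m) (Fin m) ℝ) (t : Fin m → ℝ)
    (T : Matrix (Fin m) (Fin m) ℝ) : ℂ :=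
  ∏ i : Fin m,
    (lpsub (Rmat Shalf T) ((i : ℕ) + 1)).det ^ ((-(t i - nthR t ((i : ℕ) + 1)) : ℝ) : ℂ)

/-- The characteristic function of the Riesz type II distribution,
`ψ(T) = ∏_i det(E_iᵀ (I - i Σ^{1/2} T Σ^{1/2}) E_i)^{(t_i - t_{i+1})}`. -/
def psiII {m : ℕ} (Shalf : Matrix (Fin m) (Fin m) ℝ) (t : Fin m → ℝ)
    (T : Matrix (Fin m) (Fin m) ℝ) : ℂ :=
  ∏ i : Fin m,
    (lpsub (Rmat Shalf T) ((i : ℕ) + 1)).det ^ (((t i - nthR t ((i : ℕ) + 1)) : ℝ) : ℂ)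


namespace RieszAux

open Complex

variable {k l p : ℕ}

/-! ### Determinant as a continuous multilinear map and its derivative -/

/-- det as a continuous multilinear map over ℝ on rows. -/
def detCM (k : ℕ) : ContinuousMultilinearMap ℝ (fun _ : Fin k => (Fin k → ℂ)) ℂ where
  toMultilinearMap :=
    ((Matrix.detRowAlternating (R := ℂ) (n := Fin k)).toMultilinearMap).restrictScalars ℝ
  cont := (continuous_id : Continuous fun A : Matrix (Fin k) (Fin k) ℂ => A).matrix_det

/-- derivative of det -/
def detDeriv (M : Matrix (Fin k) (Fin k) ℂ) : Matrix (Fin k) (Fin k) ℂ →L[ℝ] ℂ :=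
  (detCM k).linearDeriv M

lemma hasFDerivAt_det (M : Matrix (Fin k) (Fin k) ℂ) :
    HasFDerivAt (fun A : Matrix (Fin k) (Fin k) ℂ => A.det) (detDeriv M) M :=
  (detCM k).hasFDerivAt M

lemma detDeriv_apply (M H : Matrix (Fin k) (Fin k) ℂ) :
    detDeriv M H = (M.adjugate * H).trace := by
  have h1 : detDeriv M H = ∑ i, ((M.updateRow i (H i)).det) :=
    (detCM k).linearDeriv_apply M H
  have h2 : ∀ i : Fin k, (M.updateRow i (H i)).det = ∑ j, H i j * M.adjugate j i := by
    intro i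
    have hv : H i = ∑ j, H i j • (Pi.single j 1 : Fin k → ℂ) := by
      funext s
      simp [Pi.single_apply, eq_comm]
    have e1 : (M.updateRow i (H i)).det = Matrix.cramer Mᵀ (H i) i := by
      rw [Matrix.cramer_apply, Matrix.updateCol_transpose, Matrix.det_transpose]
    rw [e1, hv, map_sum]
    simp [Matrix.adjugate_def, Finset.sum_apply, mul_comm, Pi.single_apply]
  rw [h1]
  simp only [h2]
  rw [Matrix.trace, Finset.sum_comm]
  refine Finset.sum_congr rfl fun j _ => ?_
  simp [Matrix.diag, Matrix.mul_apply, mul_comm]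

/-! ### Continuous linear maps of matrices -/

lemma cmat_add {m : ℕ} (A B : Matrix (Fin m) (Fin m) ℝ) :
    cmat (A + B) = cmat A + cmat B := by
  ext i j; simp [cmat]

lemma cmat_smul {m : ℕ} (r : ℝ) (A : Matrix (Fin m) (Fin m) ℝ) :
    cmat (r • A) = r • cmat A := by
  ext i j; simp [cmat]

def lmulCLM (P : Matrix (Fin k) (Fin l) ℂ) :
    Matrix (Fin l) (Fin p) ℂ →L[ℝ] Matrix (Fin k) (Fin p) ℂ :=
  LinearMap.toContinuousLinearMap
  { toFun := fun X => P * X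
    map_add' := fun X Y => Matrix.mul_add _ _ _
    map_smul' := fun r X => by simp [Matrix.mul_smul] }

@[simp] lemma lmulCLM_apply (P : Matrix (Fin k) (Fin l) ℂ) (X : Matrix (Fin l) (Fin p) ℂ) :
    lmulCLM P X = P * X := rfl

def rmulCLM (Q : Matrix (Fin l) (Fin p) ℂ) :
    Matrix (Fin k) (Fin l) ℂ →L[ℝ] Matrix (Fin k) (Fin p) ℂ :=
  LinearMap.toContinuousLinearMap
  { toFun := fun X => X * Q
    map_add' := fun X Y => Matrix.add_mul _ _ _
    map_smul' := fun r X => by simp [Matrix.smul_mul] }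

@[simp] lemma rmulCLM_apply (Q : Matrix (Fin l) (Fin p) ℂ) (X : Matrix (Fin k) (Fin l) ℂ) :
    rmulCLM Q X = X * Q := rfl

def traceCLM (k : ℕ) : Matrix (Fin k) (Fin k) ℂ →L[ℝ] ℂ :=
  LinearMap.toContinuousLinearMap (Matrix.traceLinearMap (Fin k) ℝ ℂ)

@[simp] lemma traceCLM_apply (A : Matrix (Fin k) (Fin k) ℂ) :
    traceCLM k A = A.trace := rfl

def sandCLM {m k : ℕ} (P : Matrix (Fin k) (Fin m) ℂ) (Q : Matrix (Fin m) (Fin k) ℂ) :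
    Matrix (Fin m) (Fin m) ℝ →L[ℝ] Matrix (Fin k) (Fin k) ℂ :=
  LinearMap.toContinuousLinearMap
  { toFun := fun H => P * cmat H * Q
    map_add' := fun a b => by simp [cmat_add, Matrix.mul_add, Matrix.add_mul]
    map_smul' := fun r a => by simp [cmat_smul, Matrix.mul_smul, Matrix.smul_mul] }

@[simp] lemma sandCLM_apply {m k : ℕ} (P : Matrix (Fin k) (Fin m) ℂ) (Q : Matrix (Fin m) (Fin k) ℂ)
    (H : Matrix (Fin m) (Fin m) ℝ) : sandCLM P Q H = P * cmat H * Q := rfl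

def mulCLM (k : ℕ) : Matrix (Fin k) (Fin k) ℂ →L[ℝ]
    Matrix (Fin k) (Fin k) ℂ →L[ℝ] Matrix (Fin k) (Fin k) ℂ :=
  LinearMap.toContinuousLinearMap
  { toFun := fun A => lmulCLM A
    map_add' := fun A B => by ext X; simp [Matrix.add_mul]
    map_smul' := fun r A => by ext X; simp [Matrix.smul_mul] }

lemma hasFDerivAt_matMul {E : Type*} [NormedAddCommGroup E] [NormedSpace ℝ E]
    {f g : E → Matrix (Fin k) (Fin k) ℂ} {f' g' : E →L[ℝ] Matrix (Fin k) (Fin k) ℂ} {x : E}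
    (hf : HasFDerivAt f f' x) (hg : HasFDerivAt g g' x) :
    HasFDerivAt (fun y => f y * g y)
      ((lmulCLM (f x)).comp g' + (rmulCLM (g x)).comp f') x := by
  have h := ((mulCLM k).isBoundedBilinearMap.hasFDerivAt (f x, g x)).comp x (hf.prodMk hg)
  exact h

def urCLM (k : ℕ) (q : Fin k) : Matrix (Fin k) (Fin k) ℂ →L[ℝ] Matrix (Fin k) (Fin k) ℂ :=
  LinearMap.toContinuousLinearMap
  { toFun := fun A => A.updateRow q 0
    map_add' := fun A B => by
      ext a b; by_cases h : a = q <;> simp [Matrix.updateRow_apply, h]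
    map_smul' := fun r A => by
      ext a b; by_cases h : a = q <;> simp [Matrix.updateRow_apply, h] }

@[simp] lemma urCLM_apply (q : Fin k) (A : Matrix (Fin k) (Fin k) ℂ) :
    urCLM k q A = A.updateRow q 0 := rfl

lemma updateRow_decomp (A : Matrix (Fin k) (Fin k) ℂ) (q : Fin k) (v : Fin k → ℂ) :
    A.updateRow q v = urCLM k q A + (0 : Matrix (Fin k) (Fin k) ℂ).updateRow q v := by
  ext a b; by_cases h : a = q <;> simp [Matrix.updateRow_apply, h]

/-- `Matrix.normedAddCommGroup` with the topology replaced by the matrix topology. -/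
abbrev matNAG (m : ℕ) : NormedAddCommGroup (Matrix (Fin m) (Fin m) ℝ) :=
  { Matrix.normedAddCommGroup with
    toMetricSpace := (Matrix.normedAddCommGroup.toMetricSpace).replaceTopology
      (U := (instTopologicalSpaceMatrix : TopologicalSpace (Matrix (Fin m) (Fin m) ℝ))) rfl }

abbrev matNS (m : ℕ) :
    @NormedSpace ℝ (Matrix (Fin m) (Fin m) ℝ) _ (matNAG m).toSeminormedAddCommGroup :=
  { toModule := Matrix.module
    norm_smul_le := Matrix.normedSpace.norm_smul_le }

instance (priority := low) clmNAG (m : ℕ) :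
    NormedAddCommGroup (Matrix (Fin m) (Fin m) ℝ →L[ℝ] ℂ) :=
  letI := matNAG m
  letI := matNS m
  ContinuousLinearMap.toNormedAddCommGroup

instance (priority := low) clmNSC (m : ℕ) :
    NormedSpace ℂ (Matrix (Fin m) (Fin m) ℝ →L[ℝ] ℂ) :=
  letI := matNAG m
  letI := matNS m
  ContinuousLinearMap.toNormedSpace

instance (priority := low) clmNSR (m : ℕ) :
    NormedSpace ℝ (Matrix (Fin m) (Fin m) ℝ →L[ℝ] ℂ) :=
  letI := matNAG m
  letI := matNS m
  ContinuousLinearMap.toNormedSpace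

instance (priority := low) clmBS (m : ℕ) :
    IsBoundedSMul ℂ (Matrix (Fin m) (Fin m) ℝ →L[ℝ] ℂ) :=
  NormedSpace.toIsBoundedSMul

instance (priority := low) clmCS (m : ℕ) :
    ContinuousSMul ℂ (Matrix (Fin m) (Fin m) ℝ →L[ℝ] ℂ) :=
  IsBoundedSMul.continuousSMul

/-! ### The `E` matrices -/

lemma EtE {m k : ℕ} (hk : k ≤ m) : (Emat ℂ m k)ᵀ * Emat ℂ m k = 1 := by
  ext i j
  have hi : (i : ℕ) < m := lt_of_lt_of_le i.2 hk
  rw [Matrix.mul_apply, Finset.sum_eq_single (⟨(i : ℕ), hi⟩ : Fin m)]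
  · simp only [Emat, Matrix.transpose_apply, Matrix.of_apply, Matrix.one_apply, Fin.ext_iff]
    simp [eq_comm]
  · intro b _ hb
    simp only [Emat, Matrix.transpose_apply, Matrix.of_apply]
    rcases eq_or_ne ((b : ℕ)) ((i : ℕ)) with h | h
    · exact absurd (Fin.ext h) hb
    · simp [h]
  · intro h; exact absurd (Finset.mem_univ _) h

/-! ### The setting of the theorem -/

variable {m : ℕ}

def eexp (t : Fin m → ℝ) (i : Fin m) : ℂ := ((-(t i - nthR t ((i : ℕ) + 1)) : ℝ) : ℂ)

def ccoef (t : Fin m → ℝ) (i : Fin m) : ℂ := ((t i - nthR t ((i : ℕ) + 1) : ℝ) : ℂ)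

def Lmap (Shalf : Matrix (Fin m) (Fin m) ℝ) (i : Fin m) :
    Matrix (Fin m) (Fin m) ℝ →L[ℝ] Matrix (Fin ((i : ℕ) + 1)) (Fin ((i : ℕ) + 1)) ℂ :=
  sandCLM ((Emat ℂ m ((i : ℕ) + 1))ᵀ * cmat Shalf) (cmat Shalf * Emat ℂ m ((i : ℕ) + 1))

def Nfun (Shalf : Matrix (Fin m) (Fin m) ℝ) (i : Fin m) (T' : Matrix (Fin m) (Fin m) ℝ) :
    Matrix (Fin ((i : ℕ) + 1)) (Fin ((i : ℕ) + 1)) ℂ :=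
  (lpsub (Rmat Shalf T') ((i : ℕ) + 1))⁻¹

def dMc (Shalf : Matrix (Fin m) (Fin m) ℝ) (i : Fin m) :
    Matrix (Fin m) (Fin m) ℝ →L[ℝ] Matrix (Fin ((i : ℕ) + 1)) (Fin ((i : ℕ) + 1)) ℂ :=
  -(Complex.I • (Lmap Shalf i))

def dNc (Shalf : Matrix (Fin m) (Fin m) ℝ) (i : Fin m) (T : Matrix (Fin m) (Fin m) ℝ) :
    Matrix (Fin m) (Fin m) ℝ →L[ℝ] Matrix (Fin ((i : ℕ) + 1)) (Fin ((i : ℕ) + 1)) ℂ :=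
  Complex.I • ((lmulCLM (Nfun Shalf i T)).comp ((rmulCLM (Nfun Shalf i T)).comp (Lmap Shalf i)))

def Theta (Shalf : Matrix (Fin m) (Fin m) ℝ) (t : Fin m → ℝ) (T' : Matrix (Fin m) (Fin m) ℝ) :
    Matrix (Fin m) (Fin m) ℝ →L[ℝ] ℂ :=
  ∑ i : Fin m, ccoef t i •
    ((traceCLM ((i : ℕ) + 1)).comp ((lmulCLM (Nfun Shalf i T')).comp (Lmap Shalf i)))

def PhiD (Shalf : Matrix (Fin m) (Fin m) ℝ) (t : Fin m → ℝ) (T' : Matrix (Fin m) (Fin m) ℝ) :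
    Matrix (Fin m) (Fin m) ℝ →L[ℝ] ℂ :=
  (Complex.I * phiI Shalf t T') • Theta Shalf t T'

def XiC (Shalf : Matrix (Fin m) (Fin m) ℝ) (i : Fin m) :
    Matrix (Fin ((i : ℕ) + 1)) (Fin ((i : ℕ) + 1)) ℂ →L[ℝ]
      (Matrix (Fin m) (Fin m) ℝ →L[ℝ] ℂ) :=
  LinearMap.toContinuousLinearMap
  { toFun := fun B => (traceCLM ((i : ℕ) + 1)).comp ((lmulCLM B).comp (Lmap Shalf i))
    map_add' := fun B C => by
      ext H
      simp [Matrix.add_mul, Matrix.trace_add]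
    map_smul' := fun r B => by
      ext H
      simp [Matrix.smul_mul, Matrix.trace_smul] }

@[simp] lemma XiC_apply (Shalf : Matrix (Fin m) (Fin m) ℝ) (i : Fin m)
    (B : Matrix (Fin ((i : ℕ) + 1)) (Fin ((i : ℕ) + 1)) ℂ) :
    XiC Shalf i B = (traceCLM ((i : ℕ) + 1)).comp ((lmulCLM B).comp (Lmap Shalf i)) := rfl

variable (Shalf : Matrix (Fin m) (Fin m) ℝ) (t : Fin m → ℝ)

lemma Mfun_eq (i : Fin m) (T' : Matrix (Fin m) (Fin m) ℝ) :
    lpsub (Rmat Shalf T') ((i : ℕ) + 1) = 1 - Complex.I • (Lmap Shalf i T') := by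
  have hk : (i : ℕ) + 1 ≤ m := i.isLt
  simp only [lpsub, Rmat, Lmap, sandCLM_apply]
  rw [Matrix.mul_sub, Matrix.mul_one, Matrix.sub_mul, EtE hk,
    Matrix.mul_smul, Matrix.smul_mul]
  simp only [Matrix.mul_assoc]

lemma hasFDerivAt_Mfun (i : Fin m) (T' : Matrix (Fin m) (Fin m) ℝ) :
    HasFDerivAt (fun T'' => lpsub (Rmat Shalf T'') ((i : ℕ) + 1)) (dMc Shalf i) T' := by
  have h2 : HasFDerivAt
      (fun T'' => (1 : Matrix (Fin ((i : ℕ) + 1)) (Fin ((i : ℕ) + 1)) ℂ)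
        - Complex.I • (Lmap Shalf i T''))
      (-(Complex.I • (Lmap Shalf i))) T' :=
    ((Lmap Shalf i).hasFDerivAt.const_smul Complex.I).const_sub 1
  have he : (fun T'' => lpsub (Rmat Shalf T'') ((i : ℕ) + 1))
      = fun T'' => (1 : Matrix (Fin ((i : ℕ) + 1)) (Fin ((i : ℕ) + 1)) ℂ)
        - Complex.I • (Lmap Shalf i T'') := funext fun T'' => Mfun_eq Shalf i T''
  rw [dMc, he]
  exact h2

lemma hasFDerivAt_det_Mfun (i : Fin m) (T' : Matrix (Fin m) (Fin m) ℝ) :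
    HasFDerivAt (fun T'' => (lpsub (Rmat Shalf T'') ((i : ℕ) + 1)).det)
      ((detDeriv (lpsub (Rmat Shalf T') ((i : ℕ) + 1))).comp (dMc Shalf i)) T' :=
  (hasFDerivAt_det _).comp T' (hasFDerivAt_Mfun Shalf i T')

/-- main first-derivative computation -/
lemma hasFDerivAt_phiI (T' : Matrix (Fin m) (Fin m) ℝ)
    (hT' : ∀ i : Fin m, (lpsub (Rmat Shalf T') ((i : ℕ) + 1)).det ∈ Complex.slitPlane) :
    HasFDerivAt (phiI Shalf t) (PhiD Shalf t T') T' := by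
  classical
  set g : Fin m → Matrix (Fin m) (Fin m) ℝ → ℂ := fun i T'' =>
    (lpsub (Rmat Shalf T'') ((i : ℕ) + 1)).det ^ (eexp t i) with hg_def
  set G : Fin m → (Matrix (Fin m) (Fin m) ℝ →L[ℝ] ℂ) := fun i =>
    (((1 : ℂ →L[ℂ] ℂ).smulRight
        (eexp t i * (lpsub (Rmat Shalf T') ((i : ℕ) + 1)).det ^ (eexp t i - 1))).restrictScalars
      ℝ).comp ((detDeriv (lpsub (Rmat Shalf T') ((i : ℕ) + 1))).comp (dMc Shalf i)) with hG_def
  have hgi : ∀ i ∈ Finset.univ, HasFDerivAt (g i) (G i) T' := by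
    intro i _
    have hcpow : HasDerivAt (fun z : ℂ => z ^ (eexp t i))
        (eexp t i * (lpsub (Rmat Shalf T') ((i : ℕ) + 1)).det ^ (eexp t i - 1))
        ((lpsub (Rmat Shalf T') ((i : ℕ) + 1)).det) :=
      (Complex.hasStrictDerivAt_cpow_const (hT' i)).hasDerivAt
    have hcpowF := (hasDerivAt_iff_hasFDerivAt.1 hcpow).restrictScalars ℝ
    exact hcpowF.comp T' (hasFDerivAt_det_Mfun Shalf i T')
  have hprod := HasFDerivAt.finset_prod hgi
  have hphi : phiI Shalf t = fun T'' => ∏ i ∈ Finset.univ, g i T'' := rfl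
  rw [hphi]
  refine hprod.congr_fderiv (ContinuousLinearMap.ext fun H => ?_).symm
  -- identify the derivative
  have hNM : ∀ i : Fin m,
      (lpsub (Rmat Shalf T') ((i : ℕ) + 1)).adjugate
        = (lpsub (Rmat Shalf T') ((i : ℕ) + 1)).det • Nfun Shalf i T' := by
    intro i
    have hne : (lpsub (Rmat Shalf T') ((i : ℕ) + 1)).det ≠ 0 :=
      Complex.slitPlane_ne_zero (hT' i)
    rw [Nfun, Matrix.inv_def, Ring.inverse_eq_inv', smul_smul, mul_inv_cancel₀ hne, one_smul]
  have key : ∀ i : Fin m,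
      (∏ j ∈ Finset.univ.erase i, g j T') • (G i H)
        = (Complex.I * phiI Shalf t T')
            * (ccoef t i * (Nfun Shalf i T' * (Lmap Shalf i H)).trace) := by
    intro i
    have hne : (lpsub (Rmat Shalf T') ((i : ℕ) + 1)).det ≠ 0 :=
      Complex.slitPlane_ne_zero (hT' i)
    have hGiH : G i H = -(Complex.I
          * ((lpsub (Rmat Shalf T') ((i : ℕ) + 1)).det
              * (Nfun Shalf i T' * (Lmap Shalf i H)).trace))
          * (eexp t i * (lpsub (Rmat Shalf T') ((i : ℕ) + 1)).det ^ (eexp t i - 1)) := by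
      simp only [hG_def, ContinuousLinearMap.comp_apply,
        ContinuousLinearMap.coe_restrictScalars', ContinuousLinearMap.smulRight_apply,
        ContinuousLinearMap.one_apply, dMc, ContinuousLinearMap.neg_apply,
        ContinuousLinearMap.smul_apply, detDeriv_apply]
      rw [hNM i]
      simp only [Matrix.mul_neg, Matrix.mul_smul, Matrix.trace_neg, Matrix.trace_smul,
        Matrix.smul_mul, smul_eq_mul]
    have hphiT : phiI Shalf t T' = g i T' * ∏ j ∈ Finset.univ.erase i, g j T' :=
      (Finset.mul_prod_erase Finset.univ (fun j => g j T') (Finset.mem_univ i)).symm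
    have hgi' : g i T'
        = (lpsub (Rmat Shalf T') ((i : ℕ) + 1)).det ^ (eexp t i - 1)
          * (lpsub (Rmat Shalf T') ((i : ℕ) + 1)).det := by
      show (lpsub (Rmat Shalf T') ((i : ℕ) + 1)).det ^ (eexp t i)
          = (lpsub (Rmat Shalf T') ((i : ℕ) + 1)).det ^ (eexp t i - 1)
            * (lpsub (Rmat Shalf T') ((i : ℕ) + 1)).det
      conv_lhs => rw [show eexp t i = (eexp t i - 1) + 1 from by ring]
      rw [Complex.cpow_add _ _ hne, Complex.cpow_one]
    have hee : eexp t i = -ccoef t i := by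
      simp [eexp, ccoef]
    rw [hGiH, hphiT, hgi', hee]
    simp only [smul_eq_mul]
    ring
  calc (PhiD Shalf t T') H
      = (Complex.I * phiI Shalf t T')
          * ∑ i : Fin m, (ccoef t i * (Nfun Shalf i T' * (Lmap Shalf i H)).trace) := by
        simp only [PhiD, Theta, ContinuousLinearMap.smul_apply, ContinuousLinearMap.sum_apply,
          ContinuousLinearMap.comp_apply, traceCLM_apply, lmulCLM_apply, smul_eq_mul]
    _ = ∑ i : Fin m, (Complex.I * phiI Shalf t T')
          * (ccoef t i * (Nfun Shalf i T' * (Lmap Shalf i H)).trace) := by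
        rw [Finset.mul_sum]
    _ = (∑ i ∈ Finset.univ, (∏ j ∈ Finset.univ.erase i, g j T') • (G i)) H := by
        simp only [ContinuousLinearMap.sum_apply, ContinuousLinearMap.smul_apply]
        exact Finset.sum_congr rfl fun i _ => (key i).symm

variable (T : Matrix (Fin m) (Fin m) ℝ)

lemma diffAt_adj (i : Fin m) :
    DifferentiableAt ℝ (fun T' => (lpsub (Rmat Shalf T') ((i : ℕ) + 1)).adjugate) T := by
  refine differentiableAt_pi.2 fun p => differentiableAt_pi.2 fun q => ?_
  have he : (fun T' => (lpsub (Rmat Shalf T') ((i : ℕ) + 1)).adjugate p q)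
      = fun T' => ((urCLM ((i : ℕ) + 1) q (lpsub (Rmat Shalf T') ((i : ℕ) + 1)))
          + (0 : Matrix (Fin ((i : ℕ) + 1)) (Fin ((i : ℕ) + 1)) ℂ).updateRow q
              (Pi.single p 1)).det := by
    funext T'
    rw [Matrix.adjugate_apply, updateRow_decomp]
  rw [he]
  exact (hasFDerivAt_det _).differentiableAt.comp T
    ((((urCLM ((i : ℕ) + 1) q).differentiableAt).comp T
      (hasFDerivAt_Mfun Shalf i T).differentiableAt).add_const _)

lemma diffAt_N (i : Fin m)
    (hne : (lpsub (Rmat Shalf T) ((i : ℕ) + 1)).det ≠ 0) :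
    DifferentiableAt ℝ (Nfun Shalf i) T := by
  have hdet := (hasFDerivAt_det_Mfun Shalf i T).differentiableAt
  have hinv : DifferentiableAt ℝ (fun T' => ((lpsub (Rmat Shalf T') ((i : ℕ) + 1)).det)⁻¹) T := by
    have h1 : DifferentiableAt ℂ (fun z : ℂ => z⁻¹) ((lpsub (Rmat Shalf T) ((i : ℕ) + 1)).det) :=
      differentiableAt_inv hne
    exact (h1.restrictScalars ℝ).comp T hdet
  have heq : Nfun Shalf i = fun T' =>
      ((lpsub (Rmat Shalf T') ((i : ℕ) + 1)).det)⁻¹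
        • (lpsub (Rmat Shalf T') ((i : ℕ) + 1)).adjugate := by
    funext T'
    rw [Nfun, Matrix.inv_def, Ring.inverse_eq_inv']
  rw [heq]
  exact hinv.smul (diffAt_adj Shalf T i)

lemma hasFDerivAt_N (i : Fin m)
    (hne : (lpsub (Rmat Shalf T) ((i : ℕ) + 1)).det ≠ 0) :
    HasFDerivAt (Nfun Shalf i) (dNc Shalf i T) T := by
  have hdiff := diffAt_N Shalf T i hne
  have hF := hdiff.hasFDerivAt
  set F := fderiv ℝ (Nfun Shalf i) T with hFdef
  have hMN := hasFDerivAt_matMul (hasFDerivAt_Mfun Shalf i T) hF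
  have hev : (fun T' => lpsub (Rmat Shalf T') ((i : ℕ) + 1) * Nfun Shalf i T')
      =ᶠ[nhds T] fun _ => (1 : Matrix (Fin ((i : ℕ) + 1)) (Fin ((i : ℕ) + 1)) ℂ) := by
    have hdetc : ContinuousAt (fun T' => (lpsub (Rmat Shalf T') ((i : ℕ) + 1)).det) T :=
      (hasFDerivAt_det_Mfun Shalf i T).continuousAt
    filter_upwards [hdetc.eventually_ne hne] with T' h
    exact Matrix.mul_nonsing_inv _ (isUnit_iff_ne_zero.2 h)
  have h0 : HasFDerivAt
      (fun _ : Matrix (Fin m) (Fin m) ℝ =>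
        (1 : Matrix (Fin ((i : ℕ) + 1)) (Fin ((i : ℕ) + 1)) ℂ))
      ((lmulCLM (lpsub (Rmat Shalf T) ((i : ℕ) + 1))).comp F
        + (rmulCLM (Nfun Shalf i T)).comp (dMc Shalf i)) T :=
    hMN.congr_of_eventuallyEq hev.symm
  have hD0 : (lmulCLM (lpsub (Rmat Shalf T) ((i : ℕ) + 1))).comp F
      + (rmulCLM (Nfun Shalf i T)).comp (dMc Shalf i) = 0 :=
    h0.unique (hasFDerivAt_const _ _)
  have hNM : Nfun Shalf i T * lpsub (Rmat Shalf T) ((i : ℕ) + 1) = 1 :=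
    Matrix.nonsing_inv_mul _ (isUnit_iff_ne_zero.2 hne)
  have hFeq : F = dNc Shalf i T := by
    refine ContinuousLinearMap.ext fun H => ?_
    have h0' : lpsub (Rmat Shalf T) ((i : ℕ) + 1) * F H
        + (dMc Shalf i H) * Nfun Shalf i T = 0 := by
      have h := ContinuousLinearMap.ext_iff.1 hD0 H
      simpa only [ContinuousLinearMap.add_apply, ContinuousLinearMap.comp_apply,
        lmulCLM_apply, rmulCLM_apply, ContinuousLinearMap.zero_apply] using h
    have h1 : lpsub (Rmat Shalf T) ((i : ℕ) + 1) * F H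
        = -((dMc Shalf i H) * Nfun Shalf i T) := eq_neg_of_add_eq_zero_left h0'
    calc F H = 1 * F H := (Matrix.one_mul _).symm
      _ = (Nfun Shalf i T * lpsub (Rmat Shalf T) ((i : ℕ) + 1)) * F H := by rw [hNM]
      _ = Nfun Shalf i T * (lpsub (Rmat Shalf T) ((i : ℕ) + 1) * F H) := by
          rw [Matrix.mul_assoc]
      _ = Nfun Shalf i T * (-((dMc Shalf i H) * Nfun Shalf i T)) := by rw [h1]
      _ = dNc Shalf i T H := by
          simp only [dMc, dNc, ContinuousLinearMap.neg_apply, ContinuousLinearMap.smul_apply,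
            ContinuousLinearMap.comp_apply, lmulCLM_apply, rmulCLM_apply]
          simp [Matrix.neg_mul, Matrix.mul_neg, Matrix.smul_mul, Matrix.mul_smul]
  exact hFeq ▸ hF

end RieszAux

open RieszAux

/-- Second Fréchet derivative of the characteristic function of the Riesz type I
distribution: `D²φ(T)(H,K) = i² [(∑_i c_i tr(A_i H))(∑_j c_j tr(A_j K))
  + ∑_i c_i tr(A_i H A_i K)] φ(T)`, where `c_i = t_i - t_{i+1}`. -/
theorem riesz_typeI_charfun_second_deriv {m : ℕ} (hm : 1 ≤ m)
    (Sig Shalf : Matrix (Fin m) (Fin m) ℝ)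
    (hSig : Sig.PosDef) (hShalf : Shalf.PosDef) (hShalf_symm : Shalf.IsSymm)
    (hsq : Shalf * Shalf = Sig)
    (t : Fin m → ℝ)
    (T : Matrix (Fin m) (Fin m) ℝ)
    (hT : ∀ i : Fin m, (lpsub (Rmat Shalf T) ((i : ℕ) + 1)).det ∈ Complex.slitPlane) :
    DifferentiableAt ℝ (phiI Shalf t) T ∧
    ∃ L₂ : Matrix (Fin m) (Fin m) ℝ →L[ℝ] (Matrix (Fin m) (Fin m) ℝ →L[ℝ] ℂ),
      HasFDerivAt (fderiv ℝ (phiI Shalf t)) L₂ T ∧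
        ∀ H K : Matrix (Fin m) (Fin m) ℝ,
          L₂ H K = Complex.I ^ 2
              * ((∑ i : Fin m, ((t i - nthR t ((i : ℕ) + 1) : ℝ) : ℂ)
                    * (Amat Shalf T i * cmat H).trace)
                  * (∑ j : Fin m, ((t j - nthR t ((j : ℕ) + 1) : ℝ) : ℂ)
                      * (Amat Shalf T j * cmat K).trace)
                + ∑ i : Fin m, ((t i - nthR t ((i : ℕ) + 1) : ℝ) : ℂ)
                    * (Amat Shalf T i * cmat H * Amat Shalf T i * cmat K).trace)
              * phiI Shalf t T := by
  classical
  have hA := hasFDerivAt_phiI Shalf t T hT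
  have hne : ∀ i : Fin m, (lpsub (Rmat Shalf T) ((i : ℕ) + 1)).det ≠ 0 := fun i =>
    Complex.slitPlane_ne_zero (hT i)
  have hThetaD : HasFDerivAt (Theta Shalf t)
      (∑ i : Fin m, ccoef t i • ((XiC Shalf i).comp (dNc Shalf i T))) T := by
    unfold Theta
    refine HasFDerivAt.fun_sum fun i _ => ?_
    exact ((XiC Shalf i).hasFDerivAt.comp T
      (hasFDerivAt_N Shalf T i (hne i))).const_smul (ccoef t i)
  have hc : HasFDerivAt (fun T' => Complex.I * phiI Shalf t T')
      (Complex.I • PhiD Shalf t T) T := hA.const_mul Complex.I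
  have hB : HasFDerivAt (PhiD Shalf t)
      ((Complex.I * phiI Shalf t T) •
          (∑ i : Fin m, ccoef t i • ((XiC Shalf i).comp (dNc Shalf i T)))
        + (Complex.I • PhiD Shalf t T).smulRight (Theta Shalf t T)) T := hc.smul hThetaD
  refine ⟨hA.differentiableAt,
    (Complex.I * phiI Shalf t T) •
        (∑ i : Fin m, ccoef t i • ((XiC Shalf i).comp (dNc Shalf i T)))
      + (Complex.I • PhiD Shalf t T).smulRight (Theta Shalf t T), ?_, ?_⟩
  · refine hB.congr_of_eventuallyEq ?_
    have hop : ∀ᶠ T' in nhds T, ∀ i : Fin m,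
        (lpsub (Rmat Shalf T') ((i : ℕ) + 1)).det ∈ Complex.slitPlane := by
      rw [Filter.eventually_all]
      intro i
      have hc' : ContinuousAt (fun T' => (lpsub (Rmat Shalf T') ((i : ℕ) + 1)).det) T :=
        (hasFDerivAt_det_Mfun Shalf i T).continuousAt
      have hm := hc'.preimage_mem_nhds (Complex.isOpen_slitPlane.mem_nhds (hT i))
      exact Filter.eventually_of_mem hm fun y hy => hy
    exact hop.mono fun T' h => (hasFDerivAt_phiI Shalf t T' h).fderiv
  · intro H K
    have T1 : ∀ (i : Fin m) (X : Matrix (Fin m) (Fin m) ℝ),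
        (Nfun Shalf i T * (Lmap Shalf i X)).trace = (Amat Shalf T i * cmat X).trace := by
      intro i X
      simp only [Lmap, sandCLM_apply, Amat, Nfun]
      simp only [← Matrix.mul_assoc]
      rw [Matrix.trace_mul_comm]
      simp only [← Matrix.mul_assoc]
      rw [Matrix.trace_mul_comm]
      simp only [← Matrix.mul_assoc]
    have T2 : ∀ i : Fin m,
        ((Nfun Shalf i T * ((Lmap Shalf i H) * Nfun Shalf i T)) * (Lmap Shalf i K)).trace
          = (Amat Shalf T i * cmat H * Amat Shalf T i * cmat K).trace := by
      intro i
      simp only [Lmap, sandCLM_apply, Amat, Nfun]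
      simp only [← Matrix.mul_assoc]
      rw [Matrix.trace_mul_comm]
      simp only [← Matrix.mul_assoc]
      rw [Matrix.trace_mul_comm]
      simp only [← Matrix.mul_assoc]
    simp only [ContinuousLinearMap.add_apply, ContinuousLinearMap.smul_apply,
      ContinuousLinearMap.smulRight_apply, ContinuousLinearMap.sum_apply,
      ContinuousLinearMap.comp_apply, XiC_apply, traceCLM_apply, lmulCLM_apply,
      rmulCLM_apply, dNc, PhiD, Theta, smul_eq_mul]
    simp only [Matrix.smul_mul, Matrix.trace_smul, smul_eq_mul]
    simp only [T1, T2]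
    simp only [ccoef]
    simp only [Finset.mul_sum, Finset.sum_mul, mul_add, add_mul]
    rw [add_comm]
    congr 1
    · exact Finset.sum_congr rfl fun x _ => Finset.sum_congr rfl fun i _ => by ring
    · exact Finset.sum_congr rfl fun x _ => by ring
end
end

section
/- Let m ≥ 1, let Σ be an m×m real symmetric positive definite matrix with symmetric positive definite square root Σ^{1/2}, let t_1,…,t_m be real numbers, set t_{m+1} := 0 and c_i := t_i − t_{i+1}, and define ψ : M_m(ℝ) → ℂ by ψ(T) := ∏_{i=1}^m det(E_iᵀ(I_m − i·Σ^{1/2} T Σ^{1/2})E_i)^{c_i}, using principal-branch complex powers. Let T be an m×m real matrix such that det(E_iᵀ(I_m − i·Σ^{1/2} T Σ^{1/2})E_i) does not lie in (−∞,0] for each i = 1,…,m. Then ψ is twice Fréchet differentiable (over ℝ) at T, and D²ψ(T)(H, K) = i²·[ (∑_{i=1}^m c_i tr(A_i H))·(∑_{j=1}^m c_j tr(A_j K)) − ∑_{i=1}^m c_i tr(A_i H A_i K) ]·ψ(T) for all H, K ∈ M_m(ℝ), where A_i := Σ^{1/2} E_i (E_iᵀ(I_m − i·Σ^{1/2} T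 Σ^{1/2})E_i)^{−1} E_iᵀ Σ^{1/2}. -/
open MeasureTheory Matrix Finset

noncomputable section

attribute [local instance] Matrix.normedAddCommGroup Matrix.normedSpace

section Aux


variable {k : ℕ}

instance (k l : ℕ) : FiniteDimensional ℝ (Matrix (Fin k) (Fin l) ℂ) :=
  inferInstanceAs (FiniteDimensional ℝ (Fin k → Fin l → ℂ))

instance (k l : ℕ) : FiniteDimensional ℝ (Matrix (Fin k) (Fin l) ℝ) :=
  inferInstanceAs (FiniteDimensional ℝ (Fin k → Fin l → ℝ))

instance (k l : ℕ) : FiniteDimensional ℂ (Matrix (Fin k) (Fin l) ℂ) :=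
  inferInstanceAs (FiniteDimensional ℂ (Fin k → Fin l → ℂ))

/-- det as a continuous multilinear map in the rows. -/
def detCML (k : ℕ) : ContinuousMultilinearMap ℂ (fun _ : Fin k => (Fin k → ℂ)) ℂ :=
  (Matrix.detRowAlternating (R := ℂ) (n := Fin k)).toMultilinearMap.mkContinuous
    (k.factorial) (by
      intro v
      have h1 : (Matrix.detRowAlternating (R := ℂ) (n := Fin k)).toMultilinearMap v
          = (Matrix.of v).det := rfl
      rw [h1, Matrix.det_apply]
      calc ‖∑ σ : Equiv.Perm (Fin k), Equiv.Perm.sign σ • ∏ i, Matrix.of v (σ i) i‖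
          ≤ ∑ σ : Equiv.Perm (Fin k), ‖Equiv.Perm.sign σ • ∏ i, Matrix.of v (σ i) i‖ :=
            norm_sum_le _ _
        _ ≤ ∑ _σ : Equiv.Perm (Fin k), ∏ i, ‖v i‖ := by
            apply Finset.sum_le_sum
            intro σ _
            have hs : ‖Equiv.Perm.sign σ • ∏ i, Matrix.of v (σ i) i‖
                = ‖∏ i, v (σ i) i‖ := by
              rcases Int.units_eq_one_or (Equiv.Perm.sign σ) with h | h <;>
                simp [h, Matrix.of_apply]
            rw [hs, norm_prod]
            calc ∏ i, ‖v (σ i) i‖ ≤ ∏ i, ‖v (σ i)‖ := by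
                  apply Finset.prod_le_prod (fun _ _ => norm_nonneg _)
                  intro i _
                  exact norm_le_pi_norm (v (σ i)) i
              _ = ∏ i, ‖v i‖ := Equiv.prod_comp σ (fun i => ‖v i‖)
        _ = (k.factorial : ℝ) * ∏ i, ‖v i‖ := by
            simp [Finset.sum_const, Fintype.card_perm]
        )

/-- The derivative of det, as a continuous linear map (adjugate form). -/
def detCLM (M : Matrix (Fin k) (Fin k) ℂ) : Matrix (Fin k) (Fin k) ℂ →L[ℂ] ℂ :=
  LinearMap.toContinuousLinearMap
    ((Matrix.traceLinearMap (Fin k) ℂ ℂ).comp (LinearMap.mulRight ℂ (Matrix.adjugate M)))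

lemma detCLM_apply (M X : Matrix (Fin k) (Fin k) ℂ) :
    detCLM M X = (X * Matrix.adjugate M).trace := rfl

lemma hasFDerivAt_det (M : Matrix (Fin k) (Fin k) ℂ) :
    HasFDerivAt (fun N : Matrix (Fin k) (Fin k) ℂ => N.det) (detCLM M) M := by
  have h : HasFDerivAt (fun N : Matrix (Fin k) (Fin k) ℂ => N.det)
      ((detCML k).linearDeriv M) M := (detCML k).hasFDerivAt (x := M)
  refine h.congr_fderiv ?_
  have happ : ∀ X : Matrix (Fin k) (Fin k) ℂ, (detCML k).linearDeriv M X
      = ∑ i, detCML k (Function.update M i (X i)) :=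
    fun X => ContinuousMultilinearMap.linearDeriv_apply _ _ _
  refine ContinuousLinearMap.ext fun (X : Matrix (Fin k) (Fin k) ℂ) => ?_
  rw [happ X]
  show _ = (X * M.adjugate).trace
  have hterm : ∀ i : Fin k, detCML k (Function.update M i (X i))
      = Matrix.cramer Mᵀ (X i) i := by
    intro i
    have : detCML k (Function.update M i (X i)) = (M.updateRow i (X i)).det := rfl
    rw [this, ← Matrix.cramer_transpose_apply]
  simp only [hterm]
  have hX : ∀ i : Fin k, Matrix.cramer Mᵀ (X i) i
      = ∑ j, X i j * Matrix.adjugate M j i := by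
    intro i
    have hv : (X i) = ∑ j, X i j • (Pi.single j 1 : Fin k → ℂ) := by
      funext r
      simp [Pi.single_apply, eq_comm]
    conv_lhs => rw [hv, map_sum]
    simp only [_root_.map_smul, Finset.sum_apply, Pi.smul_apply, smul_eq_mul]
    rfl
  simp only [hterm, hX]
  simp [Matrix.trace, Matrix.diag, Matrix.mul_apply]

/-- updateRow with fixed row index and zero row, as a linear map. -/
def updLin (k : ℕ) (j : Fin k) : Matrix (Fin k) (Fin k) ℂ →ₗ[ℂ] Matrix (Fin k) (Fin k) ℂ where
  toFun N := N.updateRow j 0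
  map_add' N M := by
    ext r s
    by_cases h : r = j <;> simp [h, Matrix.updateRow_apply]
  map_smul' c N := by
    ext r s
    by_cases h : r = j <;> simp [h, Matrix.updateRow_apply]

lemma updateRow_eq_updLin (k : ℕ) (j : Fin k) (c : Fin k → ℂ) (N : Matrix (Fin k) (Fin k) ℂ) :
    N.updateRow j c = updLin k j N + (0 : Matrix (Fin k) (Fin k) ℂ).updateRow j c := by
  ext r s
  by_cases h : r = j <;> simp [h, updLin, Matrix.updateRow_apply]

lemma differentiableAt_adjugate (M : Matrix (Fin k) (Fin k) ℂ) :
    DifferentiableAt ℂ (fun N : Matrix (Fin k) (Fin k) ℂ => N.adjugate) M := by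
  refine differentiableAt_pi.2 ?_
  intro i
  refine differentiableAt_pi.2 ?_
  intro j
  have hfun : (fun N : Matrix (Fin k) (Fin k) ℂ => N.adjugate i j)
      = (fun N : Matrix (Fin k) (Fin k) ℂ =>
          ((updLin k j N + (0 : Matrix (Fin k) (Fin k) ℂ).updateRow j (Pi.single i 1)).det)) := by
    funext N
    rw [Matrix.adjugate_apply, updateRow_eq_updLin]
  rw [hfun]
  exact (hasFDerivAt_det _).differentiableAt.comp M
    (((updLin k j).toContinuousLinearMap.differentiableAt).add_const _)
/-- Matrix multiplication as a continuous bilinear map (over ℝ). -/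
def mulCLM (k : ℕ) : Matrix (Fin k) (Fin k) ℂ →L[ℝ]
    Matrix (Fin k) (Fin k) ℂ →L[ℝ] Matrix (Fin k) (Fin k) ℂ :=
  LinearMap.toContinuousLinearMap
    { toFun := fun X => LinearMap.toContinuousLinearMap
        ((LinearMap.mul ℝ (Matrix (Fin k) (Fin k) ℂ)) X)
      map_add' := fun X Y => by ext Z; simp [add_mul]
      map_smul' := fun c X => by ext Z; simp [smul_mul_assoc] }

lemma mulCLM_apply (X Y : Matrix (Fin k) (Fin k) ℂ) : mulCLM k X Y = X * Y := rfl

lemma hasFDerivAt_matrix_inv {E : Type*} [NormedAddCommGroup E] [NormedSpace ℝ E]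
    {f : E → Matrix (Fin k) (Fin k) ℂ} {f' : E →L[ℝ] Matrix (Fin k) (Fin k) ℂ} {x : E}
    (hf : HasFDerivAt f f' x) (hdet : (f x).det ≠ 0) :
    HasFDerivAt (fun y => (f y)⁻¹)
      (-((mulCLM k (f x)⁻¹).comp (((mulCLM k).flip ((f x)⁻¹)).comp f'))) x := by
  -- W is differentiable at x
  have hWdiff : DifferentiableAt ℝ (fun y => (f y)⁻¹) x := by
    have hinv : (fun y => (f y)⁻¹)
        = fun y => ((f y).det)⁻¹ • (f y).adjugate := by
      funext y
      rw [Matrix.inv_def, Ring.inverse_eq_inv']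
    rw [hinv]
    have hd : DifferentiableAt ℝ (fun y => ((f y).det)⁻¹) x := by
      have : DifferentiableAt ℝ (fun y => (f y).det) x :=
        ((hasFDerivAt_det (f x)).restrictScalars ℝ).differentiableAt.comp x hf.differentiableAt
      exact this.inv hdet
    have ha : DifferentiableAt ℝ (fun y => (f y).adjugate) x :=
      ((differentiableAt_adjugate (f x)).restrictScalars ℝ).comp x hf.differentiableAt
    exact hd.smul ha
  obtain ⟨W', hW'⟩ := hWdiff
  -- near x, f is invertible
  have hev : ∀ᶠ y in nhds x, (f y)⁻¹ * f y = 1 := by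
    have hcont : ContinuousAt (fun y => (f y).det) x :=
      (((hasFDerivAt_det (f x)).restrictScalars ℝ).differentiableAt.comp x
        hf.differentiableAt).continuousAt
    have hne : ∀ᶠ y in nhds x, (f y).det ≠ 0 := hcont.eventually_ne hdet
    filter_upwards [hne] with y hy
    exact Matrix.nonsing_inv_mul (f y) (isUnit_iff_ne_zero.mpr hy)
  -- product rule for W * f
  have hmul : HasFDerivAt (fun y => (f y)⁻¹ * f y)
      ((mulCLM k ((f x)⁻¹)).comp f' + (show E →L[ℝ] Matrix (Fin k) (Fin k) ℂ from ((mulCLM k).flip (f x)).comp W')) x := by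
    have hb := ((mulCLM k).isBoundedBilinearMap.hasFDerivAt ((f x)⁻¹, f x)).comp x
      (hW'.prodMk hf)
    exact hb
  have hzero : HasFDerivAt (fun y => (f y)⁻¹ * f y)
      (0 : E →L[ℝ] Matrix (Fin k) (Fin k) ℂ) x :=
    (hasFDerivAt_const (1 : Matrix (Fin k) (Fin k) ℂ) x).congr_of_eventuallyEq hev
  have heq := hmul.unique hzero
  -- solve for W'
  have hW'eq : W' = -((mulCLM k (f x)⁻¹).comp (((mulCLM k).flip ((f x)⁻¹)).comp f')) := by
    ext H
    have h1 : (f x)⁻¹ * f' H + W' H * f x = 0 := by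
      have := congrArg (fun L : E →L[ℝ] Matrix (Fin k) (Fin k) ℂ => L H) heq
      exact this
    have h2 : W' H * f x = -((f x)⁻¹ * f' H) := eq_neg_of_add_eq_zero_right h1
    have h3 : W' H * (f x * (f x)⁻¹) = -((f x)⁻¹ * f' H) * (f x)⁻¹ := by
      rw [← mul_assoc, h2]
    rw [Matrix.mul_nonsing_inv (f x) (isUnit_iff_ne_zero.mpr hdet), mul_one] at h3
    rw [h3, Matrix.neg_mul, Matrix.mul_assoc]; rfl
  rw [← hW'eq]
  exact hW'

section Main

variable {m : ℕ} (Shalf : Matrix (Fin m) (Fin m) ℝ) (t : Fin m → ℝ)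

lemma cmat_add (H K : Matrix (Fin m) (Fin m) ℝ) : cmat (H + K) = cmat H + cmat K := by
  ext i j; simp [cmat]

lemma real_smul_cmatrix {a b : ℕ} (r : ℝ) (X : Matrix (Fin a) (Fin b) ℂ) :
    (r : ℂ) • X = r • X := by
  ext i j
  simp [Complex.real_smul]

lemma cmat_smul (r : ℝ) (H : Matrix (Fin m) (Fin m) ℝ) :
    cmat (r • H) = (r : ℂ) • cmat H := by
  ext i j; simp [cmat]

/-- The linear part of `T ↦ Eᵀ (Σ^{1/2} T Σ^{1/2}) E`. -/
def linMap (i : Fin m) :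
    Matrix (Fin m) (Fin m) ℝ →ₗ[ℝ] Matrix (Fin ((i : ℕ) + 1)) (Fin ((i : ℕ) + 1)) ℂ where
  toFun H := (Emat ℂ m ((i : ℕ) + 1))ᵀ * (cmat Shalf * cmat H * cmat Shalf) *
      Emat ℂ m ((i : ℕ) + 1)
  map_add' H K := by
    simp only [cmat_add]
    rw [Matrix.mul_add, Matrix.add_mul, Matrix.mul_add, Matrix.add_mul]
  map_smul' r H := by
    simp only [cmat_smul, RingHom.id_apply]
    rw [Matrix.mul_smul, Matrix.smul_mul, Matrix.mul_smul, Matrix.smul_mul,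
      real_smul_cmatrix]

/-- `T ↦ E_iᵀ (I - i Σ^{1/2} T Σ^{1/2}) E_i`. -/
def Nmap (i : Fin m) (T' : Matrix (Fin m) (Fin m) ℝ) :
    Matrix (Fin ((i : ℕ) + 1)) (Fin ((i : ℕ) + 1)) ℂ :=
  lpsub (Rmat Shalf T') ((i : ℕ) + 1)

/-- The (constant) derivative of `Nmap`. -/
def NmapD (i : Fin m) :
    Matrix (Fin m) (Fin m) ℝ →L[ℝ] Matrix (Fin ((i : ℕ) + 1)) (Fin ((i : ℕ) + 1)) ℂ :=
  LinearMap.toContinuousLinearMap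
    { toFun := fun H => (-Complex.I) • linMap Shalf i H
      map_add' := fun H K => by rw [map_add, smul_add]
      map_smul' := fun r H => by
        rw [(linMap Shalf i).map_smul, RingHom.id_apply, smul_comm] }

lemma NmapD_apply (i : Fin m) (H : Matrix (Fin m) (Fin m) ℝ) :
    NmapD Shalf i H = (-Complex.I) • linMap Shalf i H := rfl

lemma Nmap_eq (i : Fin m) (T' : Matrix (Fin m) (Fin m) ℝ) :
    Nmap Shalf i T' = (Emat ℂ m ((i : ℕ) + 1))ᵀ * Emat ℂ m ((i : ℕ) + 1) + NmapD Shalf i T' := by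
  rw [NmapD_apply]
  show (Emat ℂ m ((i : ℕ) + 1))ᵀ * (1 - Complex.I • (cmat Shalf * cmat T' * cmat Shalf)) *
      Emat ℂ m ((i : ℕ) + 1) = _
  rw [Matrix.mul_sub, Matrix.sub_mul, Matrix.mul_one, Matrix.mul_smul, Matrix.smul_mul,
    sub_eq_add_neg, ← neg_smul]
  rfl

lemma hasFDerivAt_Nmap (i : Fin m) (T' : Matrix (Fin m) (Fin m) ℝ) :
    HasFDerivAt (Nmap Shalf i) (NmapD Shalf i) T' := by
  have h : HasFDerivAt
      (fun T'' => (Emat ℂ m ((i : ℕ) + 1))ᵀ * Emat ℂ m ((i : ℕ) + 1) + NmapD Shalf i T'')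
      (NmapD Shalf i) T' := (NmapD Shalf i).hasFDerivAt.const_add _
  exact h.congr_of_eventuallyEq (Filter.Eventually.of_forall fun y => Nmap_eq Shalf i y)

/-- The derivative of the principal-minor determinant function. -/
def GD (i : Fin m) (T' : Matrix (Fin m) (Fin m) ℝ) : Matrix (Fin m) (Fin m) ℝ →L[ℝ] ℂ :=
  ((detCLM (Nmap Shalf i T')).restrictScalars ℝ).comp (NmapD Shalf i)

lemma hasFDerivAt_G (i : Fin m) (T' : Matrix (Fin m) (Fin m) ℝ) :
    HasFDerivAt (fun T'' => (Nmap Shalf i T'').det) (GD Shalf i T') T' :=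
  ((hasFDerivAt_det (Nmap Shalf i T')).restrictScalars ℝ).comp T' (hasFDerivAt_Nmap Shalf i T')

/-- `X ↦ Σ^{1/2} E X Eᵀ Σ^{1/2}` as a linear map. -/
def PsiL (i : Fin m) :
    Matrix (Fin ((i : ℕ) + 1)) (Fin ((i : ℕ) + 1)) ℂ →ₗ[ℝ] Matrix (Fin m) (Fin m) ℂ where
  toFun X := cmat Shalf * Emat ℂ m ((i : ℕ) + 1) * X * (Emat ℂ m ((i : ℕ) + 1))ᵀ * cmat Shalf
  map_add' X Y := by
    rw [Matrix.mul_add, Matrix.add_mul, Matrix.add_mul]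
  map_smul' r X := by
    rw [RingHom.id_apply, Matrix.mul_smul, Matrix.smul_mul, Matrix.smul_mul]

lemma Amat_eq_PsiL (i : Fin m) (T' : Matrix (Fin m) (Fin m) ℝ) :
    Amat Shalf T' i = PsiL Shalf i ((Nmap Shalf i T')⁻¹) := rfl

/-- The derivative of `T ↦ A_i(T)` at `T`. -/
def AmatD (i : Fin m) (T' : Matrix (Fin m) (Fin m) ℝ) :
    Matrix (Fin m) (Fin m) ℝ →L[ℝ] Matrix (Fin m) (Fin m) ℂ :=
  (LinearMap.toContinuousLinearMap (PsiL Shalf i)).comp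
    (-((mulCLM ((i : ℕ) + 1) (Nmap Shalf i T')⁻¹).comp
        (((mulCLM ((i : ℕ) + 1)).flip ((Nmap Shalf i T')⁻¹)).comp (NmapD Shalf i))))

lemma hasFDerivAt_Amat (i : Fin m) (T' : Matrix (Fin m) (Fin m) ℝ)
    (hdet : (Nmap Shalf i T').det ≠ 0) :
    HasFDerivAt (fun T'' => Amat Shalf T'' i) (AmatD Shalf i T') T' := by
  have hW := hasFDerivAt_matrix_inv (hasFDerivAt_Nmap Shalf i T') hdet
  exact (LinearMap.toContinuousLinearMap (PsiL Shalf i)).hasFDerivAt.comp T' hW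

set_option maxHeartbeats 1600000 in
lemma AmatD_apply (i : Fin m) (T' : Matrix (Fin m) (Fin m) ℝ)
    (H : Matrix (Fin m) (Fin m) ℝ) :
    AmatD Shalf i T' H =
      Complex.I • (Amat Shalf T' i * cmat H * Amat Shalf T' i) := by
  have h0 : AmatD Shalf i T' H =
      PsiL Shalf i (-((Nmap Shalf i T')⁻¹ *
        (((-Complex.I) • linMap Shalf i H) * (Nmap Shalf i T')⁻¹))) := by
    simp only [AmatD, ContinuousLinearMap.coe_comp', Function.comp_apply,
      ContinuousLinearMap.neg_apply, ContinuousLinearMap.flip_apply,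
      LinearMap.coe_toContinuousLinearMap, LinearMap.coe_toContinuousLinearMap',
      mulCLM_apply, NmapD_apply]
    rfl
  rw [h0, Matrix.smul_mul, Matrix.mul_smul, neg_smul, neg_neg]
  set W := (Nmap Shalf i T')⁻¹ with hW
  set E := Emat ℂ m ((i : ℕ) + 1)
  set cS := cmat Shalf
  set cH := cmat H
  have h1 : PsiL Shalf i (Complex.I • (W * (linMap Shalf i H * W)))
      = Complex.I • PsiL Shalf i (W * (linMap Shalf i H * W)) := by
    show cS * E * (Complex.I • (W * (linMap Shalf i H * W))) * Eᵀ * cS = _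
    rw [Matrix.mul_smul, Matrix.smul_mul, Matrix.smul_mul]
    rfl
  rw [h1]
  congr 1
  show cS * E * (W * ((Eᵀ * (cS * cH * cS) * E) * W)) * Eᵀ * cS
      = Amat Shalf T' i * cH * Amat Shalf T' i
  show cS * E * (W * ((Eᵀ * (cS * cH * cS) * E) * W)) * Eᵀ * cS
      = (cS * E * W * Eᵀ * cS) * cH * (cS * E * W * Eᵀ * cS)
  simp only [Matrix.mul_assoc]

/-- `B ↦ (H ↦ tr (B ⬝ cmat H))` : a fixed continuous linear map. -/
def PhiCLM : Matrix (Fin m) (Fin m) ℂ →L[ℝ]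
    (Matrix (Fin m) (Fin m) ℝ →L[ℝ] ℂ) :=
  LinearMap.toContinuousLinearMap
    { toFun := fun B => LinearMap.toContinuousLinearMap
        { toFun := fun H => (B * cmat H).trace
          map_add' := fun H K => by
            rw [cmat_add, Matrix.mul_add, Matrix.trace_add]
          map_smul' := fun r H => by
            rw [cmat_smul, RingHom.id_apply, Matrix.mul_smul, Matrix.trace_smul,
              Complex.real_smul, smul_eq_mul] }
      map_add' := fun B C => by
        ext H
        show ((B + C) * cmat H).trace = (B * cmat H).trace + (C * cmat H).trace
        rw [Matrix.add_mul, Matrix.trace_add]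
      map_smul' := fun r B => by
        ext H
        show ((r • B) * cmat H).trace = r • (B * cmat H).trace
        rw [Matrix.smul_mul, Matrix.trace_smul] }

lemma PhiCLM_apply (B : Matrix (Fin m) (Fin m) ℂ) (H : Matrix (Fin m) (Fin m) ℝ) :
    PhiCLM B H = (B * cmat H).trace := rfl

/-- `B(T) = -i ∑ c_i A_i(T)`. -/
def Bfun (T' : Matrix (Fin m) (Fin m) ℝ) : Matrix (Fin m) (Fin m) ℂ :=
  -(Complex.I • ∑ i : Fin m, ((t i - nthR t ((i : ℕ) + 1) : ℝ) : ℂ) • Amat Shalf T' i)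

/-- Key trace identity : `tr((Eᵀ Σ H Σ E) W) = tr(Σ E W Eᵀ Σ H)`. -/
lemma trace_lin (i : Fin m) (T' : Matrix (Fin m) (Fin m) ℝ) (H : Matrix (Fin m) (Fin m) ℝ) :
    (linMap Shalf i H * (Nmap Shalf i T')⁻¹).trace
      = (Amat Shalf T' i * cmat H).trace := by
  set W := (Nmap Shalf i T')⁻¹
  set E := Emat ℂ m ((i : ℕ) + 1)
  set cS := cmat Shalf
  set cH := cmat H
  have h1 : linMap Shalf i H * W = (Eᵀ * (cS * cH)) * (cS * (E * W)) := by
    show Eᵀ * (cS * cH * cS) * E * W = _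
    simp only [Matrix.mul_assoc]
  have h2 : Amat Shalf T' i * cH = (cS * (E * W)) * (Eᵀ * (cS * cH)) := by
    show cS * E * W * Eᵀ * cS * cH = _
    simp only [Matrix.mul_assoc]
  rw [h1, h2, Matrix.trace_mul_comm]

lemma GD_apply (i : Fin m) (T' : Matrix (Fin m) (Fin m) ℝ)
    (hdet : (Nmap Shalf i T').det ≠ 0) (H : Matrix (Fin m) (Fin m) ℝ) :
    GD Shalf i T' H
      = -(Complex.I * ((Nmap Shalf i T').det * (Amat Shalf T' i * cmat H).trace)) := by
  have h0 : GD Shalf i T' H = ((NmapD Shalf i H) * (Nmap Shalf i T').adjugate).trace := rfl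
  have hadj : (Nmap Shalf i T').adjugate = (Nmap Shalf i T').det • (Nmap Shalf i T')⁻¹ := by
    rw [Matrix.inv_def, Ring.inverse_eq_inv', smul_smul, mul_inv_cancel₀ hdet, one_smul]
  rw [h0, NmapD_apply, Matrix.smul_mul, Matrix.trace_smul, hadj, Matrix.mul_smul,
    Matrix.trace_smul, trace_lin]
  simp only [smul_eq_mul, neg_smul, neg_mul]

lemma Bfun_trace (T' : Matrix (Fin m) (Fin m) ℝ) (H : Matrix (Fin m) (Fin m) ℝ) :
    (Bfun Shalf t T' * cmat H).trace
      = -(Complex.I * ∑ i : Fin m, ((t i - nthR t ((i : ℕ) + 1) : ℝ) : ℂ)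
          * (Amat Shalf T' i * cmat H).trace) := by
  rw [Bfun, Matrix.neg_mul, Matrix.trace_neg, Matrix.smul_mul, Matrix.trace_smul,
    Finset.sum_mul]
  simp only [smul_mul_assoc, Matrix.trace_sum, Matrix.trace_smul, smul_eq_mul]


lemma hasFDerivAt_psiII (T' : Matrix (Fin m) (Fin m) ℝ)
    (h : ∀ i : Fin m, (lpsub (Rmat Shalf T') ((i : ℕ) + 1)).det ∈ Complex.slitPlane) :
    HasFDerivAt (psiII Shalf t) (psiII Shalf t T' • PhiCLM (Bfun Shalf t T')) T' := by
  classical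
  have hGne : ∀ i : Fin m, (Nmap Shalf i T').det ≠ 0 :=
    fun i => Complex.slitPlane_ne_zero (h i)
  set c : Fin m → ℂ := fun i => ((t i - nthR t ((i : ℕ) + 1) : ℝ) : ℂ) with hc
  have key : ∀ i : Fin m, HasFDerivAt (fun T'' => (Nmap Shalf i T'').det ^ (c i))
      ((((1 : ℂ →L[ℂ] ℂ).smulRight
          (c i * (Nmap Shalf i T').det ^ (c i - 1))).restrictScalars ℝ).comp
        (GD Shalf i T')) T' := by
    intro i
    have hpow := ((Complex.hasStrictDerivAt_cpow_const (c := c i) (h i)).hasDerivAt).hasFDerivAt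
    exact (hpow.restrictScalars ℝ).comp T' (hasFDerivAt_G Shalf i T')
  have hprod := HasFDerivAt.finset_prod (u := Finset.univ) (fun i _ => key i)
  have hfun : psiII Shalf t = fun T'' => ∏ i : Fin m, (Nmap Shalf i T'').det ^ (c i) := rfl
  rw [hfun]
  refine HasFDerivAt.congr_fderiv hprod ?_
  ext H
  refine (ContinuousLinearMap.sum_apply _ _ _).trans ?_
  change ∑ i : Fin m, (∏ j ∈ Finset.univ.erase i, (Nmap Shalf j T').det ^ (c j)) *
      (GD Shalf i T' H * (c i * (Nmap Shalf i T').det ^ (c i - 1)))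
    = (∏ j : Fin m, (Nmap Shalf j T').det ^ (c j)) * (Bfun Shalf t T' * cmat H).trace
  rw [Bfun_trace]
  have perI : ∀ i : Fin m,
      (∏ j ∈ Finset.univ.erase i, (Nmap Shalf j T').det ^ (c j)) *
        (GD Shalf i T' H * (c i * (Nmap Shalf i T').det ^ (c i - 1)))
      = psiII Shalf t T' * -(Complex.I * (c i * (Amat Shalf T' i * cmat H).trace)) := by
    intro i
    rw [GD_apply Shalf i T' (hGne i) H]
    have hpow_i : (Nmap Shalf i T').det ^ (c i - 1) * (Nmap Shalf i T').det
        = (Nmap Shalf i T').det ^ (c i) := by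
      conv_rhs => rw [show c i = (c i - 1) + 1 by ring]
      rw [Complex.cpow_add _ _ (hGne i), Complex.cpow_one]
    have hpsi_i : (∏ j ∈ Finset.univ.erase i, (Nmap Shalf j T').det ^ (c j)) *
        (Nmap Shalf i T').det ^ (c i) = psiII Shalf t T' :=
      Finset.prod_erase_mul Finset.univ _ (Finset.mem_univ i)
    calc (∏ j ∈ Finset.univ.erase i, (Nmap Shalf j T').det ^ (c j)) *
          (-(Complex.I * ((Nmap Shalf i T').det * (Amat Shalf T' i * cmat H).trace)) *
            (c i * (Nmap Shalf i T').det ^ (c i - 1)))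
        = ((∏ j ∈ Finset.univ.erase i, (Nmap Shalf j T').det ^ (c j)) *
            ((Nmap Shalf i T').det ^ (c i - 1) * (Nmap Shalf i T').det)) *
            -(Complex.I * (c i * (Amat Shalf T' i * cmat H).trace)) := by ring
      _ = _ := by rw [hpow_i, hpsi_i]
  rw [Finset.sum_congr rfl fun i _ => perI i, ← Finset.mul_sum]
  have hsum : ∑ i : Fin m, -(Complex.I * (c i * (Amat Shalf T' i * cmat H).trace))
      = -(Complex.I * ∑ i : Fin m, c i * (Amat Shalf T' i * cmat H).trace) := by
    rw [Finset.sum_neg_distrib, ← Finset.mul_sum]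
  rw [hsum]
  rfl

/-- Second Fréchet derivative of the characteristic function of the Riesz type II
distribution: `D²ψ(T)(H,K) = i² [(∑_i c_i tr(A_i H))(∑_j c_j tr(A_j K))
  - ∑_i c_i tr(A_i H A_i K)] ψ(T)`, where `c_i = t_i - t_{i+1}`. -/
theorem riesz_typeII_charfun_second_deriv {m : ℕ} (hm : 1 ≤ m)
    (Sig Shalf : Matrix (Fin m) (Fin m) ℝ)
    (hSig : Sig.PosDef) (hShalf : Shalf.PosDef) (hShalf_symm : Shalf.IsSymm)
    (hsq : Shalf * Shalf = Sig)
    (t : Fin m → ℝ)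
    (T : Matrix (Fin m) (Fin m) ℝ)
    (hT : ∀ i : Fin m, (lpsub (Rmat Shalf T) ((i : ℕ) + 1)).det ∈ Complex.slitPlane) :
    DifferentiableAt ℝ (psiII Shalf t) T ∧
    ∃ L₂ : Matrix (Fin m) (Fin m) ℝ →L[ℝ] (Matrix (Fin m) (Fin m) ℝ →L[ℝ] ℂ),
      HasFDerivAt (fderiv ℝ (psiII Shalf t)) L₂ T ∧
        ∀ H K : Matrix (Fin m) (Fin m) ℝ,
          L₂ H K = Complex.I ^ 2
              * ((∑ i : Fin m, ((t i - nthR t ((i : ℕ) + 1) : ℝ) : ℂ)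
                    * (Amat Shalf T i * cmat H).trace)
                  * (∑ j : Fin m, ((t j - nthR t ((j : ℕ) + 1) : ℝ) : ℂ)
                      * (Amat Shalf T j * cmat K).trace)
                - ∑ i : Fin m, ((t i - nthR t ((i : ℕ) + 1) : ℝ) : ℂ)
                    * (Amat Shalf T i * cmat H * Amat Shalf T i * cmat K).trace)
              * psiII Shalf t T := by
  
  classical
  set c : Fin m → ℂ := fun i => ((t i - nthR t ((i : ℕ) + 1) : ℝ) : ℂ) with hc
  have hψT := hasFDerivAt_psiII Shalf t T hT
  have hGne : ∀ i : Fin m, (Nmap Shalf i T).det ≠ 0 :=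
    fun i => Complex.slitPlane_ne_zero (hT i)
  refine ⟨hψT.differentiableAt, ?_⟩
  set BD : Matrix (Fin m) (Fin m) ℝ →L[ℝ] Matrix (Fin m) (Fin m) ℂ :=
    -(Complex.I • ∑ i : Fin m, c i • AmatD Shalf i T) with hBD
  have hB : HasFDerivAt (Bfun Shalf t) BD T := by
    have hsumA : HasFDerivAt (fun T'' => ∑ i : Fin m, c i • Amat Shalf T'' i)
        (∑ i : Fin m, c i • AmatD Shalf i T) T :=
      HasFDerivAt.fun_sum (fun i _ =>
        (hasFDerivAt_Amat Shalf i T (hGne i)).const_smul (c i))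
    exact ((hsumA.const_smul Complex.I).neg)
  letI : NormedAddCommGroup (Matrix (Fin m) (Fin m) ℝ →L[ℝ] ℂ) :=
    ContinuousLinearMap.toNormedAddCommGroup
  letI : NormedSpace ℝ (Matrix (Fin m) (Fin m) ℝ →L[ℝ] ℂ) := ContinuousLinearMap.toNormedSpace
  have hΦB : HasFDerivAt (fun T'' => PhiCLM (Bfun Shalf t T''))
      ((PhiCLM (m := m)).comp BD) T := PhiCLM.hasFDerivAt.comp T hB
  haveI : ContinuousSMul ℂ (Matrix (Fin m) (Fin m) ℝ →L[ℝ] ℂ) := by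
    have hb : IsBoundedSMul ℂ (Matrix (Fin m) (Fin m) ℝ →L[ℝ] ℂ) :=
      IsBoundedSMul.of_norm_smul_le fun c f => ContinuousLinearMap.opNorm_smul_le c f
    exact @IsBoundedSMul.continuousSMul _ _ _ _ _ _ _ hb
  have hL1 : HasFDerivAt (fun T'' => psiII Shalf t T'' • PhiCLM (Bfun Shalf t T''))
      (psiII Shalf t T • ((PhiCLM (m := m)).comp BD) +
        (psiII Shalf t T • PhiCLM (Bfun Shalf t T)).smulRight
          (PhiCLM (Bfun Shalf t T))) T :=
      @HasFDerivAt.smul _ _ _ _ _ _ _ _ _ _ _ _ _ _ ContinuousLinearMap.module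
        (IsBoundedSMul.of_norm_smul_le fun c f => ContinuousLinearMap.opNorm_smul_le c f)
        ContinuousLinearMap.isScalarTower _ _ hψT hΦB
  refine ⟨_, hL1.congr_of_eventuallyEq ?_, ?_⟩
  · have hev : ∀ᶠ T'' in nhds T, ∀ i : Fin m,
        (lpsub (Rmat Shalf T'') ((i : ℕ) + 1)).det ∈ Complex.slitPlane := by
      rw [Filter.eventually_all]
      intro i
      have hcont : ContinuousAt (fun T'' => (Nmap Shalf i T'').det) T :=
        (hasFDerivAt_G Shalf i T).differentiableAt.continuousAt
      exact hcont.eventually_mem (Complex.isOpen_slitPlane.mem_nhds (hT i))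
    filter_upwards [hev] with y hy
    exact (hasFDerivAt_psiII Shalf t y hy).fderiv
  · intro H K
    have hBDH : BD H = -(Complex.I • ∑ i : Fin m,
        c i • (Complex.I • (Amat Shalf T i * cmat H * Amat Shalf T i))) := by
      rw [hBD]
      simp only [ContinuousLinearMap.neg_apply, ContinuousLinearMap.smul_apply,
        ContinuousLinearMap.sum_apply, AmatD_apply]
    have hL2 : (psiII Shalf t T • ((PhiCLM (m := m)).comp BD) +
        (psiII Shalf t T • PhiCLM (Bfun Shalf t T)).smulRight
          (PhiCLM (Bfun Shalf t T))) H K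
        = psiII Shalf t T * ((BD H) * cmat K).trace +
          (psiII Shalf t T * ((Bfun Shalf t T) * cmat H).trace) *
            ((Bfun Shalf t T) * cmat K).trace := by
      simp only [ContinuousLinearMap.add_apply, ContinuousLinearMap.coe_smul',
        Pi.smul_apply, ContinuousLinearMap.coe_comp', Function.comp_apply,
        ContinuousLinearMap.smulRight_apply, smul_eq_mul, PhiCLM_apply,
        ContinuousLinearMap.coe_sum']
    rw [hL2, hBDH, Bfun_trace, Bfun_trace]
    have htr : (-(Complex.I • ∑ i : Fin m,
          c i • (Complex.I • (Amat Shalf T i * cmat H * Amat Shalf T i))) * cmat K).trace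
        = -(Complex.I * ∑ i : Fin m,
            c i * (Complex.I * (Amat Shalf T i * cmat H * Amat Shalf T i * cmat K).trace)) := by
      rw [Matrix.neg_mul, Matrix.trace_neg, Matrix.smul_mul, Matrix.trace_smul,
        Finset.sum_mul]
      simp only [smul_mul_assoc, Matrix.trace_sum, Matrix.trace_smul, smul_eq_mul]
    rw [htr]
    have hpull : ∑ i : Fin m,
        c i * (Complex.I * (Amat Shalf T i * cmat H * Amat Shalf T i * cmat K).trace)
        = Complex.I * ∑ i : Fin m,
            c i * (Amat Shalf T i * cmat H * Amat Shalf T i * cmat K).trace := by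
      rw [Finset.mul_sum]
      exact Finset.sum_congr rfl (fun i _ => by ring)
    rw [hpull]
    ring
end Main
end Aux
end
end
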